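/- Assume good X, ↑good inp, ↑goodAbs binp, |dom inp| < |var| and |dom binp| < |var|. Then the simplification rules for freshness hold as equivalences: (1) fresh ys y (Var xs x) if and only if (ys,y) ≠ (xs,x); (2) fresh ys y (Op δ inp binp) if and only if ↑(fresh ys y) inp and ↑(freshAbs ys y) binp; (3) freshAbs ys y (Abs xs x X) if and only if (ys,y) = (xs,x) or fresh ys y X. -/
import Mathlib


open scoped Classical

universe u

section Binding

variable (var varsort index bindex opsym : Type u)

/-! ### Inputs -/

/-- An `(α,β)`-input: a partial function from `α` to `β`. -/
abbrev Input (α β : Type u) : Type u := α → Option β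

/-- The domain of an input. -/
def idom {α β : Type u} (inp : Input α β) : Set α := {a | inp a ≠ none}

/-- The componentwise lifting of a predicate to inputs. -/
def liftP {α β : Type u} (P : β → Prop) (inp : Input α β) : Prop :=
  ∀ a b, inp a = some b → P b

/-- The componentwise lifting of a function to inputs. -/
def liftF {α β γ : Type u} (f : β → γ) (inp : Input α β) : Input α γ :=
  fun a => (inp a).map f

/-- An input is small if its domain has cardinality smaller than that of `var`. -/
def smallDom {α β : Type u} (inp : Input α β) : Prop :=
  Cardinal.mk (idom inp) < Cardinal.mk var

/-! ### Quasiterms -/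

mutual
/-- Quasiterms: raw terms before quotienting by alpha-equivalence. -/
inductive QTerm : Type u where
  | qVar : varsort → var → QTerm
  | qOp : opsym → (index → Option QTerm) → (bindex → Option QAbs) → QTerm
/-- Quasiabstractions. -/
inductive QAbs : Type u where
  | qAbs : varsort → var → QTerm → QAbs
end

/-- Transposition of two variables. -/
noncomputable def swapVar (z1 z2 x : var) : var :=
  if x = z1 then z2 else if x = z2 then z1 else x

/-- Sort-aware transposition of variables (acts only on variables of varsort `zs`). -/
noncomputable def swapVarS (zs xs : varsort) (z1 z2 x : var) : var :=
  if xs = zs then swapVar var z1 z2 x else x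

variable {var varsort index bindex opsym}

/-- Swapping of the variables `z1`, `z2` at varsort `zs` in a quasiterm
(transposing them everywhere, including binding positions). -/
noncomputable def qSwap (z1 z2 : var) (zs : varsort) :
    QTerm var varsort index bindex opsym → QTerm var varsort index bindex opsym :=
  QTerm.rec (motive_1 := fun _ => QTerm var varsort index bindex opsym)
    (motive_2 := fun _ => QAbs var varsort index bindex opsym)
    (motive_3 := fun _ => Option (QTerm var varsort index bindex opsym))
    (motive_4 := fun _ => Option (QAbs var varsort index bindex opsym))
    (fun xs x => .qVar xs (swapVarS var varsort zs xs z1 z2 x))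
    (fun d _ _ rinp rbinp => .qOp d rinp rbinp)
    (fun xs x _ rX => .qAbs xs (swapVarS var varsort zs xs z1 z2 x) rX)
    none (fun _ r => some r) none (fun _ r => some r)

/-- Swapping of variables in a quasiabstraction. -/
noncomputable def qSwapAbs (z1 z2 : var) (zs : varsort) :
    QAbs var varsort index bindex opsym → QAbs var varsort index bindex opsym
  | .qAbs xs x X => .qAbs xs (swapVarS var varsort zs xs z1 z2 x) (qSwap z1 z2 zs X)

/-! ### Freshness and goodness -/

mutual
/-- `QFresh ys y X`: the variable `y` of varsort `ys` has no free occurrence in `X`. -/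
inductive QFresh : varsort → var → QTerm var varsort index bindex opsym → Prop where
  | qVar : ∀ {ys y xs x}, (ys, y) ≠ (xs, x) → QFresh ys y (.qVar xs x)
  | qOp : ∀ {ys y d inp binp}, (∀ i X, inp i = some X → QFresh ys y X) →
      (∀ j A, binp j = some A → QFreshAbs ys y A) → QFresh ys y (.qOp d inp binp)
/-- Freshness for quasiabstractions. -/
inductive QFreshAbs : varsort → var → QAbs var varsort index bindex opsym → Prop where
  | qAbs_bound : ∀ {xs x X}, QFreshAbs xs x (.qAbs xs x X)
  | qAbs_body : ∀ {ys y xs x X}, QFresh ys y X → QFreshAbs ys y (.qAbs xs x X)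
end

mutual
/-- Good quasiterms: all constructors branch less than `|var|`. -/
inductive QGood : QTerm var varsort index bindex opsym → Prop where
  | qVar : ∀ {xs x}, QGood (.qVar xs x)
  | qOp : ∀ {d inp binp}, (∀ i X, inp i = some X → QGood X) →
      (∀ j A, binp j = some A → QGoodAbs A) →
      smallDom var inp → smallDom var binp → QGood (.qOp d inp binp)
/-- Good quasiabstractions. -/
inductive QGoodAbs : QAbs var varsort index bindex opsym → Prop where
  | qAbs : ∀ {xs x X}, QGood X → QGoodAbs (.qAbs xs x X)
end

/-! ### Alpha-equivalence -/

mutual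
/-- Alpha-equivalence of quasiterms. -/
inductive Alpha : QTerm var varsort index bindex opsym →
    QTerm var varsort index bindex opsym → Prop where
  | qVar : ∀ {xs x}, Alpha (.qVar xs x) (.qVar xs x)
  | qOp : ∀ {d inp binp inp' binp'},
      (∀ i, inp i = none ↔ inp' i = none) →
      (∀ i X X', inp i = some X → inp' i = some X' → Alpha X X') →
      (∀ j, binp j = none ↔ binp' j = none) →
      (∀ j A A', binp j = some A → binp' j = some A' → AlphaAbs A A') →
      Alpha (.qOp d inp binp) (.qOp d inp' binp')
/-- Alpha-equivalence of quasiabstractions (the exists-fresh formulation). -/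
inductive AlphaAbs : QAbs var varsort index bindex opsym →
    QAbs var varsort index bindex opsym → Prop where
  | qAbs : ∀ {xs x x' X X' y}, y ∉ ({x, x'} : Set var) →
      QFresh xs y X → QFresh xs y X' →
      Alpha (qSwap y x xs X) (qSwap y x' xs X') →
      AlphaAbs (.qAbs xs x X) (.qAbs xs x' X')
end

/-! ### Terms and abstractions as quotients -/

variable (var varsort index bindex opsym)

/-- Terms: quasiterms modulo alpha-equivalence. -/
def Term : Type u := Quot (@Alpha var varsort index bindex opsym)

/-- Abstractions: quasiabstractions modulo alpha-equivalence. -/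
def Abstr : Type u := Quot (@AlphaAbs var varsort index bindex opsym)

variable {var varsort index bindex opsym}

/-- The projection from quasiterms to terms. -/
def tmk : QTerm var varsort index bindex opsym → Term var varsort index bindex opsym :=
  Quot.mk _

/-- The projection from quasiabstractions to abstractions. -/
def amk : QAbs var varsort index bindex opsym → Abstr var varsort index bindex opsym :=
  Quot.mk _

/-- A representative of a term. -/
noncomputable def trep (X : Term var varsort index bindex opsym) :
    QTerm var varsort index bindex opsym := Quot.out X

/-- A representative of an abstraction. -/
noncomputable def arep (A : Abstr var varsort index bindex opsym) :
    QAbs var varsort index bindex opsym := Quot.out A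

/-- Good terms. -/
def good (X : Term var varsort index bindex opsym) : Prop := QGood (trep X)

/-- Good abstractions. -/
def goodAbs (A : Abstr var varsort index bindex opsym) : Prop := QGoodAbs (arep A)

/-- The variable-injection constructor on terms. -/
def Var (xs : varsort) (x : var) : Term var varsort index bindex opsym :=
  tmk (.qVar xs x)

/-- The operation constructor on terms. -/
noncomputable def Op (d : opsym) (inp : Input index (Term var varsort index bindex opsym))
    (binp : Input bindex (Abstr var varsort index bindex opsym)) :
    Term var varsort index bindex opsym :=
  tmk (.qOp d (liftF trep inp) (liftF arep binp))

/-- The abstraction constructor. -/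
noncomputable def Abs (xs : varsort) (x : var) (X : Term var varsort index bindex opsym) :
    Abstr var varsort index bindex opsym :=
  amk (.qAbs xs x (trep X))

/-- Freshness on terms. -/
def fresh (ys : varsort) (y : var) (X : Term var varsort index bindex opsym) : Prop :=
  QFresh ys y (trep X)

/-- Freshness on abstractions. -/
def freshAbs (ys : varsort) (y : var) (A : Abstr var varsort index bindex opsym) : Prop :=
  QFreshAbs ys y (arep A)

/-- Swapping on terms. -/
noncomputable def tswap (X : Term var varsort index bindex opsym)
    (z1 z2 : var) (zs : varsort) : Term var varsort index bindex opsym :=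
  tmk (qSwap z1 z2 zs (trep X))

/-! ### Substitution -/

mutual
/-- The graph of capture-avoiding substitution on quasiterms:
`QSubst X Y y ys Z` means that `Z` is a result of substituting `Y` for the free
occurrences of the variable `y` of varsort `ys` in `X` (along a capture-free
representative). -/
inductive QSubst : QTerm var varsort index bindex opsym →
    QTerm var varsort index bindex opsym → var → varsort →
    QTerm var varsort index bindex opsym → Prop where
  | var_eq : ∀ {Y y ys}, QSubst (.qVar ys y) Y y ys Y
  | var_ne : ∀ {Y y ys xs x}, (xs, x) ≠ (ys, y) → QSubst (.qVar xs x) Y y ys (.qVar xs x)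
  | op : ∀ {Y y ys d inp binp inp' binp'},
      (∀ i, inp i = none ↔ inp' i = none) →
      (∀ i X X', inp i = some X → inp' i = some X' → QSubst X Y y ys X') →
      (∀ j, binp j = none ↔ binp' j = none) →
      (∀ j A A', binp j = some A → binp' j = some A' → QSubstAbs A Y y ys A') →
      QSubst (.qOp d inp binp) Y y ys (.qOp d inp' binp')
/-- The graph of capture-avoiding substitution on quasiabstractions. -/
inductive QSubstAbs : QAbs var varsort index bindex opsym →
    QTerm var varsort index bindex opsym → var → varsort →
    QAbs var varsort index bindex opsym → Prop where
  | abs : ∀ {Y y ys xs x X X'}, (xs, x) ≠ (ys, y) → QFresh xs x Y →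
      QSubst X Y y ys X' → QSubstAbs (.qAbs xs x X) Y y ys (.qAbs xs x X')
end

/-- The graph of capture-avoiding substitution on terms. -/
def SubstRel (X Y : Term var varsort index bindex opsym) (y : var) (ys : varsort)
    (Z : Term var varsort index bindex opsym) : Prop :=
  ∃ qX qZ, tmk qX = X ∧ tmk qZ = Z ∧ QSubst qX (trep Y) y ys qZ

/-- Capture-avoiding substitution on terms: `subst X Y y ys` is `X[Y/y]_ys`. -/
noncomputable def subst (X Y : Term var varsort index bindex opsym)
    (y : var) (ys : varsort) : Term var varsort index bindex opsym :=
  if h : ∃ Z, SubstRel X Y y ys Z then h.choose else X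

/-- The graph of capture-avoiding substitution on abstractions. -/
def SubstAbsRel (A : Abstr var varsort index bindex opsym)
    (Y : Term var varsort index bindex opsym) (y : var) (ys : varsort)
    (B : Abstr var varsort index bindex opsym) : Prop :=
  ∃ qA qB, amk qA = A ∧ amk qB = B ∧ QSubstAbs qA (trep Y) y ys qB

/-- Capture-avoiding substitution on abstractions: `substAbs A Y y ys` is `A[Y/y]_ys`. -/
noncomputable def substAbs (A : Abstr var varsort index bindex opsym)
    (Y : Term var varsort index bindex opsym) (y : var) (ys : varsort) :
    Abstr var varsort index bindex opsym :=
  if h : ∃ B, SubstAbsRel A Y y ys B then h.choose else A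

/-! ### Parallel substitution -/

mutual
/-- The graph of capture-avoiding parallel substitution on quasiterms, along an
assignment `ρ : varsort → var → Option qterm`. -/
inductive QPSubst : QTerm var varsort index bindex opsym →
    (varsort → var → Option (QTerm var varsort index bindex opsym)) →
    QTerm var varsort index bindex opsym → Prop where
  | var_some : ∀ {ρ xs x Y}, ρ xs x = some Y → QPSubst (.qVar xs x) ρ Y
  | var_none : ∀ {ρ xs x}, ρ xs x = none → QPSubst (.qVar xs x) ρ (.qVar xs x)
  | op : ∀ {ρ d inp binp inp' binp'},
      (∀ i, inp i = none ↔ inp' i = none) →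
      (∀ i X X', inp i = some X → inp' i = some X' → QPSubst X ρ X') →
      (∀ j, binp j = none ↔ binp' j = none) →
      (∀ j A A', binp j = some A → binp' j = some A' → QPSubstAbs A ρ A') →
      QPSubst (.qOp d inp binp) ρ (.qOp d inp' binp')
/-- The graph of capture-avoiding parallel substitution on quasiabstractions. -/
inductive QPSubstAbs : QAbs var varsort index bindex opsym →
    (varsort → var → Option (QTerm var varsort index bindex opsym)) →
    QAbs var varsort index bindex opsym → Prop where
  | abs : ∀ {ρ xs x X X'}, ρ xs x = none →
      (∀ ys y Y, ρ ys y = some Y → QFresh xs x Y) →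
      QPSubst X ρ X' → QPSubstAbs (.qAbs xs x X) ρ (.qAbs xs x X')
end

/-- Turning a term-valued assignment into a quasiterm-valued one, by picking
representatives. -/
noncomputable def qassign (ρ : varsort → var → Option (Term var varsort index bindex opsym)) :
    varsort → var → Option (QTerm var varsort index bindex opsym) :=
  fun xs x => (ρ xs x).map trep

/-- The graph of parallel substitution on terms. -/
def PSubstRel (X : Term var varsort index bindex opsym)
    (ρ : varsort → var → Option (Term var varsort index bindex opsym))
    (Z : Term var varsort index bindex opsym) : Prop :=
  ∃ qX qZ, tmk qX = X ∧ tmk qZ = Z ∧ QPSubst qX (qassign ρ) qZ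

/-- Capture-avoiding parallel substitution on terms: `psubst X ρ` is `X[ρ]`. -/
noncomputable def psubst (X : Term var varsort index bindex opsym)
    (ρ : varsort → var → Option (Term var varsort index bindex opsym)) :
    Term var varsort index bindex opsym :=
  if h : ∃ Z, PSubstRel X ρ Z then h.choose else X

/-- The graph of parallel substitution on abstractions. -/
def PSubstAbsRel (A : Abstr var varsort index bindex opsym)
    (ρ : varsort → var → Option (Term var varsort index bindex opsym))
    (B : Abstr var varsort index bindex opsym) : Prop :=
  ∃ qA qB, amk qA = A ∧ amk qB = B ∧ QPSubstAbs qA (qassign ρ) qB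

/-- Capture-avoiding parallel substitution on abstractions. -/
noncomputable def psubstAbs (A : Abstr var varsort index bindex opsym)
    (ρ : varsort → var → Option (Term var varsort index bindex opsym)) :
    Abstr var varsort index bindex opsym :=
  if h : ∃ B, PSubstAbsRel A ρ B then h.choose else A

/-! ### Auxiliary lemmas -/

theorem swapVar_invol (z1 z2 x : var) :
    swapVar var z1 z2 (swapVar var z1 z2 x) = x := by
  unfold swapVar
  by_cases h1 : x = z1 <;> by_cases h2 : x = z2 <;> simp_all <;> split_ifs <;> simp_all

theorem swapVarS_invol (zs xs : varsort) (z1 z2 x : var) :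
    swapVarS var varsort zs xs z1 z2 (swapVarS var varsort zs xs z1 z2 x) = x := by
  unfold swapVarS
  split_ifs <;> simp [swapVar_invol]

theorem swapVarS_inj (zs xs : varsort) (z1 z2 : var) {x y : var}
    (h : swapVarS var varsort zs xs z1 z2 x = swapVarS var varsort zs xs z1 z2 y) : x = y := by
  have := congrArg (swapVarS var varsort zs xs z1 z2) h
  rwa [swapVarS_invol, swapVarS_invol] at this

theorem qSwap_qVar (z1 z2 : var) (zs xs : varsort) (x : var) :
    qSwap z1 z2 zs (QTerm.qVar (index := index) (bindex := bindex) (opsym := opsym) xs x)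
      = .qVar xs (swapVarS var varsort zs xs z1 z2 x) := rfl

theorem qSwap_qOp (z1 z2 : var) (zs : varsort) (d : opsym)
    (inp : index → Option (QTerm var varsort index bindex opsym))
    (binp : bindex → Option (QAbs var varsort index bindex opsym)) :
    qSwap z1 z2 zs (.qOp d inp binp)
      = .qOp d (fun i => (inp i).map (qSwap z1 z2 zs)) (fun j => (binp j).map (qSwapAbs z1 z2 zs)) := by
  show QTerm.qOp _ _ _ = _
  congr 1
  · funext i; cases inp i <;> rfl
  · funext j; rcases binp j with _|⟨xs,x,X⟩ <;> rfl

theorem qterm_induct (P : QTerm var varsort index bindex opsym → Prop)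
    (Q : QAbs var varsort index bindex opsym → Prop)
    (hvar : ∀ xs x, P (.qVar xs x))
    (hop : ∀ d inp binp, (∀ i X, inp i = some X → P X) → (∀ j A, binp j = some A → Q A) →
      P (.qOp d inp binp))
    (habs : ∀ xs x X, P X → Q (.qAbs xs x X)) :
    (∀ X, P X) ∧ (∀ A, Q A) :=
  ⟨fun X => QTerm.rec (motive_1 := P) (motive_2 := Q)
    (motive_3 := fun o => ∀ X, o = some X → P X)
    (motive_4 := fun o => ∀ A, o = some A → Q A)
    hvar (fun d inp binp rinp rbinp => hop d inp binp rinp rbinp)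
    (fun xs x X rX => habs xs x X rX)
    (fun X h => by simp_all) (fun X rX Y h => by cases h; exact rX)
    (fun A h => by simp_all) (fun A rA B h => by cases h; exact rA) X,
   fun A => QAbs.rec (motive_1 := P) (motive_2 := Q)
    (motive_3 := fun o => ∀ X, o = some X → P X)
    (motive_4 := fun o => ∀ A, o = some A → Q A)
    hvar (fun d inp binp rinp rbinp => hop d inp binp rinp rbinp)
    (fun xs x X rX => habs xs x X rX)
    (fun X h => by simp_all) (fun X rX Y h => by cases h; exact rX)
    (fun A h => by simp_all) (fun A rA B h => by cases h; exact rA) A⟩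

theorem qSwap_invol_both (z1 z2 : var) (zs : varsort) :
    (∀ X : QTerm var varsort index bindex opsym, qSwap z1 z2 zs (qSwap z1 z2 zs X) = X) ∧
    (∀ A : QAbs var varsort index bindex opsym, qSwapAbs z1 z2 zs (qSwapAbs z1 z2 zs A) = A) := by
  refine qterm_induct _ _ ?_ ?_ ?_
  · intro xs x; rw [qSwap_qVar, qSwap_qVar, swapVarS_invol]
  · intro d inp binp hi hb
    rw [qSwap_qOp, qSwap_qOp]
    congr 1
    · funext i
      rcases h : inp i with _|X
      · rfl
      · simp [hi i X h]
    · funext j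
      rcases h : binp j with _|A
      · rfl
      · simp [hb j A h]
  · intro xs x X hX
    show QAbs.qAbs _ _ _ = _
    rw [swapVarS_invol, hX]

theorem qSwap_invol (z1 z2 : var) (zs : varsort)
    (X : QTerm var varsort index bindex opsym) :
    qSwap z1 z2 zs (qSwap z1 z2 zs X) = X := (qSwap_invol_both z1 z2 zs).1 X

theorem qSwapAbs_invol (z1 z2 : var) (zs : varsort)
    (A : QAbs var varsort index bindex opsym) :
    qSwapAbs z1 z2 zs (qSwapAbs z1 z2 zs A) = A := (qSwap_invol_both z1 z2 zs).2 A
section Equivar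
variable {ys : varsort} {u : var} (z1 z2 : var) (zs : varsort)

theorem qFresh_equiv_fwd {X : QTerm var varsort index bindex opsym} (h : QFresh ys u X) :
    QFresh ys (swapVarS var varsort zs ys z1 z2 u) (qSwap z1 z2 zs X) := by
  refine QFresh.rec (motive_1 := fun X _ => QFresh ys (swapVarS var varsort zs ys z1 z2 u) (qSwap z1 z2 zs X))
    (motive_2 := fun A _ => QFreshAbs ys (swapVarS var varsort zs ys z1 z2 u) (qSwapAbs z1 z2 zs A))
    ?_ ?_ ?_ ?_ h
  · intro xs x hne
    rw [qSwap_qVar]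
    refine QFresh.qVar fun hc => hne ?_
    obtain ⟨h1, h2⟩ := Prod.mk.injEq .. ▸ hc
    subst h1
    exact Prod.ext rfl (swapVarS_inj zs ys z1 z2 h2)
  · intro d inp binp _ _ ri rb
    rw [qSwap_qOp]
    refine QFresh.qOp ?_ ?_
    · intro i X hX
      obtain ⟨X0, h0, rfl⟩ := Option.map_eq_some_iff.mp hX
      exact ri i X0 h0
    · intro j A hA
      obtain ⟨A0, h0, rfl⟩ := Option.map_eq_some_iff.mp hA
      exact rb j A0 h0
  · intro X
    exact QFreshAbs.qAbs_bound
  · intro xs x X _ rX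
    exact QFreshAbs.qAbs_body rX

theorem qFreshAbs_equiv_fwd {A : QAbs var varsort index bindex opsym} (h : QFreshAbs ys u A) :
    QFreshAbs ys (swapVarS var varsort zs ys z1 z2 u) (qSwapAbs z1 z2 zs A) := by
  refine QFreshAbs.rec (motive_1 := fun X _ => QFresh ys (swapVarS var varsort zs ys z1 z2 u) (qSwap z1 z2 zs X))
    (motive_2 := fun A _ => QFreshAbs ys (swapVarS var varsort zs ys z1 z2 u) (qSwapAbs z1 z2 zs A))
    ?_ ?_ ?_ ?_ h
  · intro xs x hne
    rw [qSwap_qVar]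
    refine QFresh.qVar fun hc => hne ?_
    obtain ⟨h1, h2⟩ := Prod.mk.injEq .. ▸ hc
    subst h1
    exact Prod.ext rfl (swapVarS_inj zs ys z1 z2 h2)
  · intro d inp binp _ _ ri rb
    rw [qSwap_qOp]
    refine QFresh.qOp ?_ ?_
    · intro i X hX
      obtain ⟨X0, h0, rfl⟩ := Option.map_eq_some_iff.mp hX
      exact ri i X0 h0
    · intro j A hA
      obtain ⟨A0, h0, rfl⟩ := Option.map_eq_some_iff.mp hA
      exact rb j A0 h0
  · intro X
    exact QFreshAbs.qAbs_bound
  · intro xs x X _ rX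
    exact QFreshAbs.qAbs_body rX

/-- Equivariance of freshness, as an equivalence. -/
theorem qFresh_equiv {X : QTerm var varsort index bindex opsym} :
    QFresh ys (swapVarS var varsort zs ys z1 z2 u) (qSwap z1 z2 zs X) ↔ QFresh ys u X := by
  constructor
  · intro h
    have := qFresh_equiv_fwd z1 z2 zs h
    rwa [swapVarS_invol, qSwap_invol] at this
  · exact qFresh_equiv_fwd z1 z2 zs

end Equivar
theorem qFreshAbs_qAbs_iff {ys : varsort} {y : var} {xs : varsort} {x : var}
    {X : QTerm var varsort index bindex opsym} :
    QFreshAbs ys y (.qAbs xs x X) ↔ ((ys, y) = (xs, x) ∨ QFresh ys y X) := by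
  constructor
  · intro h
    cases h with
    | qAbs_bound => exact Or.inl rfl
    | qAbs_body h => exact Or.inr h
  · rintro (h | h)
    · obtain ⟨rfl, rfl⟩ := Prod.mk.injEq .. ▸ h
      exact QFreshAbs.qAbs_bound
    · exact QFreshAbs.qAbs_body h

/-- Core one-directional transfer for the abstraction case. -/
theorem abs_core {xs : varsort} {y0 x x' : var}
    {X X' : QTerm var varsort index bindex opsym}
    (hy0 : y0 ∉ ({x, x'} : Set var)) (f1 : QFresh xs y0 X) (f2 : QFresh xs y0 X')
    (ih : ∀ ys y, QFresh ys y (qSwap y0 x xs X) ↔ QFresh ys y (qSwap y0 x' xs X'))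
    {ys : varsort} {y : var} (h : QFreshAbs ys y (.qAbs xs x X)) :
    QFreshAbs ys y (.qAbs xs x' X') := by
  simp only [Set.mem_insert_iff, Set.mem_singleton_iff, not_or] at hy0
  obtain ⟨hy0x, hy0x'⟩ := hy0
  rw [qFreshAbs_qAbs_iff] at h ⊢
  by_cases hx' : (ys, y) = (xs, x')
  · exact Or.inl hx'
  by_cases hx : (ys, y) = (xs, x)
  · -- bound on the left; x ≠ x' here
    obtain ⟨rfl, rfl⟩ := Prod.mk.injEq .. ▸ hx
    right
    have hxx' : y ≠ x' := fun hc => hx' (by rw [hc])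
    -- QFresh ys y0 X  →  QFresh ys y (qSwap y0 y ys X)
    have h1 : QFresh ys y (qSwap y0 y ys X) := by
      have := qFresh_equiv_fwd (ys := ys) (u := y0) y0 y ys f1
      rwa [show swapVarS var varsort ys ys y0 y y0 = y by
        simp [swapVarS, swapVar]] at this
    have h2 : QFresh ys y (qSwap y0 x' ys X') := (ih ys y).mp h1
    have h3 := qFresh_equiv_fwd (ys := ys) (u := y) y0 x' ys h2
    rwa [qSwap_invol, show swapVarS var varsort ys ys y0 x' y = y by
      unfold swapVarS swapVar
      rw [if_pos rfl, if_neg (fun hc => hy0x hc.symm), if_neg hxx']] at h3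
  · -- not bound on either side
    rcases h with h | h
    · exact absurd h hx
    by_cases hcase : ys = xs ∧ y = y0
    · obtain ⟨rfl, rfl⟩ := hcase
      exact Or.inr f2
    · right
      have hfix : ∀ z : var, z ≠ y0 → (ys, y) ≠ (xs, z) →
          swapVarS var varsort xs ys y0 z y = y := by
        intro z hz hne
        unfold swapVarS swapVar
        split_ifs with h1 h2 h3
        · exact absurd ⟨h1, h2⟩ hcase
        · exact absurd (Prod.ext h1 h3) hne
        · rfl
        · rfl
      have h1 := qFresh_equiv_fwd (ys := ys) (u := y) y0 x xs h
      rw [hfix x (fun hc => hy0x hc.symm) hx] at h1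
      have h2 := (ih ys y).mp h1
      have h3 := qFresh_equiv_fwd (ys := ys) (u := y) y0 x' xs h2
      rwa [qSwap_invol, hfix x' (fun hc => hy0x' hc.symm) hx'] at h3

/-- Freshness is invariant under alpha-equivalence. -/
theorem alpha_fresh {X X' : QTerm var varsort index bindex opsym} (h : Alpha X X') :
    ∀ ys y, QFresh ys y X ↔ QFresh ys y X' := by
  refine Alpha.rec (motive_1 := fun X X' _ => ∀ ys y, QFresh ys y X ↔ QFresh ys y X')
    (motive_2 := fun A A' _ => ∀ ys y, QFreshAbs ys y A ↔ QFreshAbs ys y A')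
    ?_ ?_ ?_ h
  · intro xs x ys y; exact Iff.rfl
  · intro d inp binp inp' binp' hdom hcomp hbdom hbcomp ih ihb ys y
    constructor
    · intro hf
      cases hf with
      | qOp hi hb =>
        refine QFresh.qOp ?_ ?_
        · intro i X' hX'
          rcases hinp : inp i with _|X0
          · exact absurd ((hdom i).mp hinp) (by simp [hX'])
          · exact (ih i X0 X' hinp hX' ys y).mp (hi i X0 hinp)
        · intro j A' hA'
          rcases hbinp : binp j with _|A0
          · exact absurd ((hbdom j).mp hbinp) (by simp [hA'])
          · exact (ihb j A0 A' hbinp hA' ys y).mp (hb j A0 hbinp)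
    · intro hf
      cases hf with
      | qOp hi hb =>
        refine QFresh.qOp ?_ ?_
        · intro i X0 hX0
          rcases hinp : inp' i with _|X'
          · exact absurd ((hdom i).mpr hinp) (by simp [hX0])
          · exact (ih i X0 X' hX0 hinp ys y).mpr (hi i X' hinp)
        · intro j A0 hA0
          rcases hbinp : binp' j with _|A'
          · exact absurd ((hbdom j).mpr hbinp) (by simp [hA0])
          · exact (ihb j A0 A' hA0 hbinp ys y).mpr (hb j A' hbinp)
  · intro xs x x' X X' y0 hy0 f1 f2 _ ih ys y
    constructor
    · exact abs_core hy0 f1 f2 ih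
    · refine abs_core ?_ f2 f1 (fun ys y => (ih ys y).symm)
      simp only [Set.mem_insert_iff, Set.mem_singleton_iff, not_or] at hy0 ⊢
      exact ⟨hy0.2, hy0.1⟩

theorem alphaAbs_fresh {A A' : QAbs var varsort index bindex opsym} (h : AlphaAbs A A') :
    ∀ ys y, QFreshAbs ys y A ↔ QFreshAbs ys y A' := by
  refine AlphaAbs.rec (motive_1 := fun X X' _ => ∀ ys y, QFresh ys y X ↔ QFresh ys y X')
    (motive_2 := fun A A' _ => ∀ ys y, QFreshAbs ys y A ↔ QFreshAbs ys y A')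
    ?_ ?_ ?_ h
  · intro xs x ys y; exact Iff.rfl
  · intro d inp binp inp' binp' hdom hcomp hbdom hbcomp ih ihb ys y
    constructor
    · intro hf
      cases hf with
      | qOp hi hb =>
        refine QFresh.qOp ?_ ?_
        · intro i X' hX'
          rcases hinp : inp i with _|X0
          · exact absurd ((hdom i).mp hinp) (by simp [hX'])
          · exact (ih i X0 X' hinp hX' ys y).mp (hi i X0 hinp)
        · intro j A' hA'
          rcases hbinp : binp j with _|A0
          · exact absurd ((hbdom j).mp hbinp) (by simp [hA'])
          · exact (ihb j A0 A' hbinp hA' ys y).mp (hb j A0 hbinp)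
    · intro hf
      cases hf with
      | qOp hi hb =>
        refine QFresh.qOp ?_ ?_
        · intro i X0 hX0
          rcases hinp : inp' i with _|X'
          · exact absurd ((hdom i).mpr hinp) (by simp [hX0])
          · exact (ih i X0 X' hX0 hinp ys y).mpr (hi i X' hinp)
        · intro j A0 hA0
          rcases hbinp : binp' j with _|A'
          · exact absurd ((hbdom j).mpr hbinp) (by simp [hA0])
          · exact (ihb j A0 A' hA0 hbinp ys y).mpr (hb j A' hbinp)
  · intro xs x x' X X' y0 hy0 f1 f2 _ ih ys y
    constructor
    · exact abs_core hy0 f1 f2 ih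
    · refine abs_core ?_ f2 f1 (fun ys y => (ih ys y).symm)
      simp only [Set.mem_insert_iff, Set.mem_singleton_iff, not_or] at hy0 ⊢
      exact ⟨hy0.2, hy0.1⟩
theorem eqvGen_fresh {X X' : QTerm var varsort index bindex opsym}
    (h : Relation.EqvGen Alpha X X') (ys : varsort) (y : var) :
    QFresh ys y X ↔ QFresh ys y X' := by
  induction h with
  | rel _ _ h => exact alpha_fresh h ys y
  | refl => exact Iff.rfl
  | symm _ _ _ ih => exact ih.symm
  | trans _ _ _ _ _ ih1 ih2 => exact ih1.trans ih2

theorem eqvGen_freshAbs {A A' : QAbs var varsort index bindex opsym}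
    (h : Relation.EqvGen AlphaAbs A A') (ys : varsort) (y : var) :
    QFreshAbs ys y A ↔ QFreshAbs ys y A' := by
  induction h with
  | rel _ _ h => exact alphaAbs_fresh h ys y
  | refl => exact Iff.rfl
  | symm _ _ _ ih => exact ih.symm
  | trans _ _ _ _ _ ih1 ih2 => exact ih1.trans ih2

theorem fresh_tmk (ys : varsort) (y : var) (q : QTerm var varsort index bindex opsym) :
    fresh ys y (tmk q) ↔ QFresh ys y q := by
  refine eqvGen_fresh (Quot.eq.mp ?_) ys y
  exact Quot.out_eq (tmk q)

theorem freshAbs_amk (ys : varsort) (y : var) (q : QAbs var varsort index bindex opsym) :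
    freshAbs ys y (amk q) ↔ QFreshAbs ys y q := by
  refine eqvGen_freshAbs (Quot.eq.mp ?_) ys y
  exact Quot.out_eq (amk q)

/-- the simplification rules for freshness hold as equivalences. -/
theorem fresh_simp_iff (hinf : Cardinal.aleph0 ≤ Cardinal.mk var)
    (hreg : (Cardinal.mk var).IsRegular)
    (X : Term var varsort index bindex opsym) (d : opsym)
    (inp : Input index (Term var varsort index bindex opsym)) (binp : Input bindex (Abstr var varsort index bindex opsym))
    (hX : good X) (hinp : liftP good inp) (hbinp : liftP goodAbs binp)
    (hsi : smallDom var inp) (hsb : smallDom var binp)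
    (ys xs : varsort) (y x : var) :
    (fresh ys y (Var xs x : Term var varsort index bindex opsym) ↔ (ys, y) ≠ (xs, x)) ∧
    (fresh ys y (Op d inp binp) ↔
      liftP (fresh ys y) inp ∧ liftP (freshAbs ys y) binp) ∧
    (freshAbs ys y (Abs xs x X) ↔ ((ys, y) = (xs, x) ∨ fresh ys y X)) := by
  refine ⟨?_, ?_, ?_⟩
  · rw [Var, fresh_tmk]
    constructor
    · intro h hc
      cases h with
      | qVar hne => exact hne hc
    · exact QFresh.qVar
  · rw [Op, fresh_tmk]
    constructor
    · intro h
      cases h with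
      | qOp hi hb =>
        constructor
        · intro i T hT
          exact hi i (trep T) (by simp [liftF, hT])
        · intro j B hB
          exact hb j (arep B) (by simp [liftF, hB])
    · rintro ⟨hi, hb⟩
      refine QFresh.qOp ?_ ?_
      · intro i qX h
        obtain ⟨T, hT, rfl⟩ := Option.map_eq_some_iff.mp h
        exact hi i T hT
      · intro j qA h
        obtain ⟨B, hB, rfl⟩ := Option.map_eq_some_iff.mp h
        exact hb j B hB
  · rw [Abs, freshAbs_amk, qFreshAbs_qAbs_iff]
    exact Iff.rfl

end Binding
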